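/- arXiv:0807.1142 — 2 statements merged into one kernel-verified Lean document; each statement's English description precedes it below -/
import Mathlib

section
/- Let K be a field of characteristic zero and let p ∈ K[x,y] have outer rank two, i.e., there is no automorphism α of K[x,y] with α(p) ∈ K[x]. Let f, g ∈ K[x₁,...,xₙ] with total degrees deg f = m and deg g = n. Then the weighted degree of p, where x has weight m and y has weight n, satisfies w_{m,n}(p) ≥ m + n. -/
open MvPolynomial

section Aux

variable {K : Type*} [Field K]

/-- Two algebra homs agree on elements of `adjoin K {X i}` if they agree on `X i`. -/
lemma aux_agree {A : Type*} [CommRing A] [Algebra K A]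
    (φ ψ : MvPolynomial (Fin 2) K →ₐ[K] A) (i : Fin 2)
    (h : φ (X i) = ψ (X i)) {a : MvPolynomial (Fin 2) K}
    (ha : a ∈ Algebra.adjoin K ({X i} : Set (MvPolynomial (Fin 2) K))) :
    φ a = ψ a := by
  induction ha using Algebra.adjoin_induction with
  | mem x hx => rw [Set.mem_singleton_iff] at hx; subst hx; exact h
  | algebraMap r => simp
  | add x y hx hy ihx ihy => simp [ihx, ihy]
  | mul x y hx hy ihx ihy => simp [ihx, ihy]

lemma aux_map_adjoin {φ : MvPolynomial (Fin 2) K →ₐ[K] MvPolynomial (Fin 2) K}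
    {i : Fin 2} {s : Set (MvPolynomial (Fin 2) K)}
    (h : φ (X i) ∈ Algebra.adjoin K s) {b : MvPolynomial (Fin 2) K}
    (hb : b ∈ Algebra.adjoin K ({X i} : Set (MvPolynomial (Fin 2) K))) :
    φ b ∈ Algebra.adjoin K s := by
  induction hb using Algebra.adjoin_induction with
  | mem x hx => rw [Set.mem_singleton_iff] at hx; subst hx; exact h
  | algebraMap r => simpa using Subalgebra.algebraMap_mem (Algebra.adjoin K s) r
  | add x y hx hy ihx ihy => simpa using add_mem ihx ihy
  | mul x y hx hy ihx ihy => simpa using mul_mem ihx ihy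

set_option maxHeartbeats 1000000 in
lemma aux_mem_adjoin (i : Fin 2) (a : MvPolynomial (Fin 2) K)
    (h : ∀ d ∈ a.support, ∀ j, j ≠ i → d j = 0) :
    a ∈ Algebra.adjoin K ({X i} : Set (MvPolynomial (Fin 2) K)) := by
  rw [a.as_sum]
  refine Subalgebra.sum_mem _ fun d hd => ?_
  have hdi : d = Finsupp.single i (d i) := by
    ext j
    rcases eq_or_ne j i with rfl | hj
    · simp
    · rw [Finsupp.single_apply, if_neg (by exact fun hh => hj hh.symm), h d hd j hj]
  have hmono : monomial d (coeff d a) = C (coeff d a) * X i ^ d i := by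
    rw [C_mul_X_pow_eq_monomial, ← hdi]
  rw [hmono]
  have h1 : (X i : MvPolynomial (Fin 2) K) ∈
      Algebra.adjoin K ({X i} : Set (MvPolynomial (Fin 2) K)) :=
    Algebra.subset_adjoin rfl
  have h2 : (C (coeff d a) : MvPolynomial (Fin 2) K) ∈
      Algebra.adjoin K ({X i} : Set (MvPolynomial (Fin 2) K)) := by
    simpa using Subalgebra.algebraMap_mem
      (Algebra.adjoin K ({X i} : Set (MvPolynomial (Fin 2) K))) (coeff d a)
  exact mul_mem h2 (pow_mem h1 _)

lemma caseA (p : MvPolynomial (Fin 2) K)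
    (h : ∀ d ∈ p.support, d 1 = 0 ∨ (d 1 = 1 ∧ d 0 = 0)) :
    ∃ α : MvPolynomial (Fin 2) K ≃ₐ[K] MvPolynomial (Fin 2) K,
      α p ∈ Algebra.adjoin K ({X 0} : Set (MvPolynomial (Fin 2) K)) := by
  set e := coeff (Finsupp.single 1 1) p with he_def
  set a := p - C e * X 1 with ha_def
  have key : ∀ d ∈ a.support, d 1 = 0 := by
    intro d hd
    by_contra hd1
    rw [mem_support_iff] at hd
    by_cases hsd : d = Finsupp.single 1 1
    · apply hd
      rw [ha_def, coeff_sub, hsd]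
      simp [he_def, coeff_C_mul]
    · have hx : coeff d (X 1 : MvPolynomial (Fin 2) K) = 0 := by
        rw [coeff_X', if_neg (fun hh => hsd hh.symm)]
      have hdp : d ∈ p.support := by
        rw [mem_support_iff]
        intro hc
        apply hd
        rw [ha_def, coeff_sub, coeff_C_mul, hx, hc]
        ring
      rcases h d hdp with h0 | ⟨h1, h0⟩
      · exact hd1 h0
      · apply hsd
        ext j
        fin_cases j <;> simp [h0, h1]
  have ha : ∀ d ∈ a.support, ∀ j, j ≠ (0 : Fin 2) → d j = 0 := by
    intro d hd j hj
    fin_cases j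
    · exact absurd rfl hj
    · exact key d hd
  have haa : a ∈ Algebra.adjoin K ({X 0} : Set (MvPolynomial (Fin 2) K)) :=
    aux_mem_adjoin 0 a ha
  have hp : p = a + C e * X 1 := by rw [ha_def]; ring
  by_cases he : e = 0
  · refine ⟨AlgEquiv.refl, ?_⟩
    have hpa : p = a := by rw [hp, he]; simp
    simpa [hpa] using haa
  · set σ : MvPolynomial (Fin 2) K →ₐ[K] MvPolynomial (Fin 2) K :=
      aeval ![X 1, X 0] with hσ_def
    set F : MvPolynomial (Fin 2) K →ₐ[K] MvPolynomial (Fin 2) K :=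
      aeval ![X 1, C e⁻¹ * (X 0 - σ a)] with hF_def
    set G : MvPolynomial (Fin 2) K →ₐ[K] MvPolynomial (Fin 2) K :=
      aeval ![C e * X 1 + a, X 0] with hG_def
    have hF0 : F (X 0) = X 1 := by rw [hF_def, aeval_X]; simp
    have hF1 : F (X 1) = C e⁻¹ * (X 0 - σ a) := by rw [hF_def, aeval_X]; simp
    have hG0 : G (X 0) = C e * X 1 + a := by rw [hG_def, aeval_X]; simp
    have hG1 : G (X 1) = X 0 := by rw [hG_def, aeval_X]; simp
    have hσ0 : σ (X 0) = X 1 := by rw [hσ_def, aeval_X]; simp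
    have hFa : F a = σ a := aux_agree F σ 0 (by rw [hF0, hσ0]) haa
    have hGσ : G (σ a) = a := by
      have := aux_agree (G.comp σ) (AlgHom.id K _) 0
        (by simp [AlgHom.comp_apply, hσ0, hG1]) haa
      simpa using this
    have hee : (C e : MvPolynomial (Fin 2) K) * C e⁻¹ = 1 := by
      rw [← C_mul, mul_inv_cancel₀ he, C_1]
    have hee' : (C e⁻¹ : MvPolynomial (Fin 2) K) * C e = 1 := by
      rw [← C_mul, inv_mul_cancel₀ he, C_1]
    have hFG : F.comp G = AlgHom.id K (MvPolynomial (Fin 2) K) := by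
      apply MvPolynomial.algHom_ext
      intro i
      fin_cases i
      · show F (G (X 0)) = X 0
        rw [hG0, map_add, map_mul, hF1, hFa]
        rw [show F (C e) = C e from F.commutes' e ▸ by simp]
        rw [← mul_assoc, hee, one_mul]
        ring
      · show F (G (X 1)) = X 1
        rw [hG1, hF0]
    have hGF : G.comp F = AlgHom.id K (MvPolynomial (Fin 2) K) := by
      apply MvPolynomial.algHom_ext
      intro i
      fin_cases i
      · show G (F (X 0)) = X 0
        rw [hF0, hG1]
      · show G (F (X 1)) = X 1
        rw [hF1, map_mul, map_sub, hG0, hGσ]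
        rw [show G (C e⁻¹) = C e⁻¹ from G.commutes' e⁻¹ ▸ by simp]
        rw [add_sub_cancel_right, ← mul_assoc, hee', one_mul]
    refine ⟨AlgEquiv.ofAlgHom F G hFG hGF, ?_⟩
    have hFp : F p = X 0 := by
      rw [hp, map_add, map_mul, hFa, hF1]
      rw [show F (C e) = C e from F.commutes' e ▸ by simp]
      rw [← mul_assoc, hee, one_mul]
      ring
    show F p ∈ _
    rw [hFp]
    exact Algebra.subset_adjoin rfl

lemma caseB (p : MvPolynomial (Fin 2) K)
    (h : ∀ d ∈ p.support, d 0 = 0 ∨ (d 0 = 1 ∧ d 1 = 0)) :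
    ∃ α : MvPolynomial (Fin 2) K ≃ₐ[K] MvPolynomial (Fin 2) K,
      α p ∈ Algebra.adjoin K ({X 0} : Set (MvPolynomial (Fin 2) K)) := by
  set e := coeff (Finsupp.single 0 1) p with he_def
  set b := p - C e * X 0 with hb_def
  have key : ∀ d ∈ b.support, d 0 = 0 := by
    intro d hd
    by_contra hd0
    rw [mem_support_iff] at hd
    by_cases hsd : d = Finsupp.single 0 1
    · apply hd
      rw [hb_def, coeff_sub, hsd]
      simp [he_def, coeff_C_mul]
    · have hx : coeff d (X 0 : MvPolynomial (Fin 2) K) = 0 := by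
        rw [coeff_X', if_neg (fun hh => hsd hh.symm)]
      have hdp : d ∈ p.support := by
        rw [mem_support_iff]
        intro hc
        apply hd
        rw [hb_def, coeff_sub, coeff_C_mul, hx, hc]
        ring
      rcases h d hdp with h0 | ⟨h1, h0⟩
      · exact hd0 h0
      · apply hsd
        ext j
        fin_cases j <;> simp [h0, h1]
  have hb : ∀ d ∈ b.support, ∀ j, j ≠ (1 : Fin 2) → d j = 0 := by
    intro d hd j hj
    fin_cases j
    · exact key d hd
    · exact absurd rfl hj
  have hbb : b ∈ Algebra.adjoin K ({X 1} : Set (MvPolynomial (Fin 2) K)) :=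
    aux_mem_adjoin 1 b hb
  have hp : p = b + C e * X 0 := by rw [hb_def]; ring
  by_cases he : e = 0
  · -- p = b ∈ K[X 1]; swap automorphism
    set σ : MvPolynomial (Fin 2) K →ₐ[K] MvPolynomial (Fin 2) K :=
      aeval ![X 1, X 0] with hσ_def
    have hσ0 : σ (X 0) = X 1 := by rw [hσ_def, aeval_X]; simp
    have hσ1 : σ (X 1) = X 0 := by rw [hσ_def, aeval_X]; simp
    have hσσ : σ.comp σ = AlgHom.id K (MvPolynomial (Fin 2) K) := by
      apply MvPolynomial.algHom_ext
      intro i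
      fin_cases i
      · show σ (σ (X 0)) = X 0
        rw [hσ0, hσ1]
      · show σ (σ (X 1)) = X 1
        rw [hσ1, hσ0]
    refine ⟨AlgEquiv.ofAlgHom σ σ hσσ hσσ, ?_⟩
    show σ p ∈ _
    have hpb : p = b := by rw [hp, he]; simp
    rw [hpb]
    exact aux_map_adjoin (by rw [hσ1]; exact Algebra.subset_adjoin rfl) hbb
  · set F : MvPolynomial (Fin 2) K →ₐ[K] MvPolynomial (Fin 2) K :=
      aeval ![C e⁻¹ * (X 0 - b), X 1] with hF_def
    set G : MvPolynomial (Fin 2) K →ₐ[K] MvPolynomial (Fin 2) K :=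
      aeval ![C e * X 0 + b, X 1] with hG_def
    have hF0 : F (X 0) = C e⁻¹ * (X 0 - b) := by rw [hF_def, aeval_X]; simp
    have hF1 : F (X 1) = X 1 := by rw [hF_def, aeval_X]; simp
    have hG0 : G (X 0) = C e * X 0 + b := by rw [hG_def, aeval_X]; simp
    have hG1 : G (X 1) = X 1 := by rw [hG_def, aeval_X]; simp
    have hFb : F b = b := aux_agree F (AlgHom.id K _) 1 (by simp [hF1]) hbb
    have hGb : G b = b := aux_agree G (AlgHom.id K _) 1 (by simp [hG1]) hbb
    have hee : (C e : MvPolynomial (Fin 2) K) * C e⁻¹ = 1 := by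
      rw [← C_mul, mul_inv_cancel₀ he, C_1]
    have hee' : (C e⁻¹ : MvPolynomial (Fin 2) K) * C e = 1 := by
      rw [← C_mul, inv_mul_cancel₀ he, C_1]
    have hFG : F.comp G = AlgHom.id K (MvPolynomial (Fin 2) K) := by
      apply MvPolynomial.algHom_ext
      intro i
      fin_cases i
      · show F (G (X 0)) = X 0
        rw [hG0, map_add, map_mul, hF0, hFb]
        rw [show F (C e) = C e from F.commutes' e ▸ by simp]
        rw [← mul_assoc, hee, one_mul]
        ring
      · show F (G (X 1)) = X 1
        rw [hG1, hF1]
    have hGF : G.comp F = AlgHom.id K (MvPolynomial (Fin 2) K) := by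
      apply MvPolynomial.algHom_ext
      intro i
      fin_cases i
      · show G (F (X 0)) = X 0
        rw [hF0, map_mul, map_sub, hG0, hGb]
        rw [show G (C e⁻¹) = C e⁻¹ from G.commutes' e⁻¹ ▸ by simp]
        rw [add_sub_cancel_right, ← mul_assoc, hee', one_mul]
      · show G (F (X 1)) = X 1
        rw [hF1, hG1]
    refine ⟨AlgEquiv.ofAlgHom F G hFG hGF, ?_⟩
    have hFp : F p = X 0 := by
      rw [hp, map_add, map_mul, hFb, hF0]
      rw [show F (C e) = C e from F.commutes' e ▸ by simp]
      rw [← mul_assoc, hee, one_mul]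
      ring
    show F p ∈ _
    rw [hFp]
    exact Algebra.subset_adjoin rfl


end Aux

/-- If p ∈ K[x,y] has outer rank two and deg f = m, deg g = n, then
the (m,n)-weighted degree of p is at least m + n. -/
theorem weighted_degree_of_outer_rank_two
    (K : Type*) [Field K] [CharZero K]
    (p : MvPolynomial (Fin 2) K)
    (horank : ¬ ∃ α : MvPolynomial (Fin 2) K ≃ₐ[K] MvPolynomial (Fin 2) K,
        α p ∈ Algebra.adjoin K ({X 0} : Set (MvPolynomial (Fin 2) K)))
    (ν : ℕ) (f g : MvPolynomial (Fin ν) K) (m n : ℕ)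
    (hf : f.totalDegree = m) (hg : g.totalDegree = n) :
    m + n ≤ weightedTotalDegree ![m, n] p := by
  by_contra hcon
  push_neg at hcon
  have hkey : ∀ d ∈ p.support, d 0 * m + d 1 * n < m + n := by
    intro d hd
    have h1 := le_weightedTotalDegree ![m, n] hd
    have hw : (Finsupp.weight ![m, n]) d = d 0 * m + d 1 * n := by
      rw [Finsupp.weight_apply, Finsupp.sum_fintype]
      · simp [Fin.sum_univ_two]
      · intro i; simp
    rw [hw] at h1
    exact lt_of_le_of_lt h1 hcon
  apply horank
  rcases le_or_gt m n with hmn | hnm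
  · apply caseA
    intro d hd
    have h := hkey d hd
    rcases Nat.eq_zero_or_pos (d 1) with h1 | h1
    · exact Or.inl h1
    · right
      have h0 : d 0 = 0 := by
        by_contra h0
        have h0' : 1 ≤ d 0 := Nat.one_le_iff_ne_zero.mpr h0
        nlinarith
      refine ⟨?_, h0⟩
      by_contra h2
      have h2' : 2 ≤ d 1 := by omega
      nlinarith
  · apply caseB
    intro d hd
    have h := hkey d hd
    rcases Nat.eq_zero_or_pos (d 0) with h0 | h0
    · exact Or.inl h0
    · right
      have h1 : d 1 = 0 := by
        by_contra h1
        have h1' : 1 ≤ d 1 := Nat.one_le_iff_ne_zero.mpr h1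
        nlinarith
      refine ⟨?_, h1⟩
      by_contra h2
      have h2' : 2 ≤ d 0 := by omega
      nlinarith
end

section
/- Let K be a field of characteristic zero, r = x + y·q(x,y) ∈ K[x,y] with q ∉ K[y], and let π be the endomorphism of K[x,y] with π(x) = r, π(y) = 0. Let α be the automorphism with α(x) = x, α(y) = y + x^M where M > deg q. Then for any f ∈ K[t] of positive degree, π(α(f(r))) = f(r + r^M · q(r, r^M)), and if x^M − y does not divide q(x,y), then q(r, r^M) ≠ 0, so π(α(f(r))) ≠ f(c·r + d) for all c ∈ K*, d ∈ K. -/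
open MvPolynomial

lemma dvd_sub_aeval_aux {K : Type*} [CommRing K] (M : ℕ)
    (p : MvPolynomial (Fin 2) K) :
    (X 1 - X 0 ^ M : MvPolynomial (Fin 2) K) ∣
      p - aeval ![X 0, X 0 ^ M] p := by
  induction p using MvPolynomial.induction_on with
  | C a => simp [algebraMap_eq]
  | add p p' hp hp' =>
      have h : p + p' - aeval (R := K) ![X 0, X 0 ^ M] (p + p')
          = (p - aeval (R := K) ![X 0, X 0 ^ M] p)
            + (p' - aeval (R := K) ![X 0, X 0 ^ M] p') := by
        rw [map_add]; ring
      rw [h]; exact dvd_add hp hp'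
  | mul_X p i hp =>
      have key : p * X i - aeval (R := K) ![X 0, X 0 ^ M] (p * X i)
          = (p - aeval (R := K) ![X 0, X 0 ^ M] p) * X i
            + aeval (R := K) ![X 0, X 0 ^ M] p
              * (X i - aeval (R := K) ![X 0, X 0 ^ M] (X i)) := by
        rw [map_mul]; ring
      rw [key]
      refine dvd_add (hp.mul_right _) (Dvd.dvd.mul_left ?_ _)
      fin_cases i
      · simp
      · simp

/-- The retraction π onto K[r] (r = x + y·q) does not send α(f(r)) to any
f(c·r + d), where α is the automorphism x ↦ x, y ↦ y + x^M with M > deg q. -/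
theorem retraction_orbit_computation
    (K : Type*) [Field K] [CharZero K]
    (q : MvPolynomial (Fin 2) K)
    (hq : q ∉ Algebra.adjoin K ({X 1} : Set (MvPolynomial (Fin 2) K)))
    (M : ℕ) (hM : q.totalDegree < M)
    (r : MvPolynomial (Fin 2) K) (hr : r = X 0 + X 1 * q)
    (π : MvPolynomial (Fin 2) K →ₐ[K] MvPolynomial (Fin 2) K)
    (hπ : π = aeval ![r, 0])
    (α : MvPolynomial (Fin 2) K →ₐ[K] MvPolynomial (Fin 2) K)
    (hα : α = aeval ![X 0, X 1 + X 0 ^ M])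
    (f : Polynomial K) (hf : 0 < f.natDegree) :
    π (α (Polynomial.aeval r f)) =
      Polynomial.aeval (r + r ^ M * aeval ![r, r ^ M] q) f ∧
    (¬ (X 0 ^ M - X 1 ∣ q) →
      aeval ![r, r ^ M] q ≠ 0 ∧
      ∀ c d : K, c ≠ 0 →
        π (α (Polynomial.aeval r f)) ≠ Polynomial.aeval (C c * r + C d) f) := by
  -- q is not constant
  have hq0 : q.totalDegree ≠ 0 := by
    intro h0
    apply hq
    have hC : q = C (q.coeff 0) := by
      ext m
      rcases eq_or_ne m 0 with rfl | hm
      · simp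
      · rw [coeff_C, if_neg (fun h => hm h.symm)]
        by_contra hne
        have := ((totalDegree_eq_zero_iff (Fin 2) q).mp h0) m (mem_support_iff.mpr hne)
        exact hm (Finsupp.ext fun x => this x)
    rw [hC]
    exact Subalgebra.algebraMap_mem _ _
  have hM2 : 2 ≤ M := by omega
  -- π ∘ α = aeval ![r, r^M]
  have hπα : ∀ p : MvPolynomial (Fin 2) K, π (α p) = aeval ![r, r ^ M] p := by
    intro p
    have : π.comp α = aeval ![r, r ^ M] := by
      subst hπ hα
      apply MvPolynomial.algHom_ext
      intro i
      fin_cases i <;> simp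
    exact DFunLike.congr_fun this p
  have hφr : aeval ![r, r ^ M] r = r + r ^ M * aeval ![r, r ^ M] q := by
    nth_rewrite 3 [hr]
    rw [map_add, map_mul, aeval_X, aeval_X]
    simp
  have part1 : π (α (Polynomial.aeval r f)) =
      Polynomial.aeval (r + r ^ M * aeval ![r, r ^ M] q) f := by
    rw [hπα, ← Polynomial.aeval_algHom_apply, hφr]
  refine ⟨part1, fun hdvd => ?_⟩
  -- the specialization y ↦ 0
  set δ : MvPolynomial (Fin 2) K →ₐ[K] Polynomial K :=
    aeval ![Polynomial.X, 0] with hδ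
  have hδr : δ r = Polynomial.X := by rw [hr]; simp [hδ]
  set u : Polynomial K := aeval ![Polynomial.X, Polynomial.X ^ M] q with hu_def
  have hfun1 : (fun i => δ (![r, r ^ M] i)) = ![Polynomial.X, Polynomial.X ^ M] := by
    funext i
    fin_cases i <;> simp [hδr]
  have hδQ : δ (aeval ![r, r ^ M] q) = u := by
    rw [comp_aeval_apply, hfun1, hu_def]
  have hu : u ≠ 0 := by
    intro h0
    have hQ0 : aeval ![X 0, X 0 ^ M] q = (0 : MvPolynomial (Fin 2) K) := by
      have : Polynomial.aeval (X 0 : MvPolynomial (Fin 2) K) u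
          = aeval (R := K) ![X 0, X 0 ^ M] q := by
        have hfun2 : (fun i => Polynomial.aeval (X 0 : MvPolynomial (Fin 2) K)
            (![(Polynomial.X : Polynomial K), Polynomial.X ^ M] i)) = ![X 0, X 0 ^ M] := by
          funext i
          fin_cases i <;> simp
        rw [hu_def, comp_aeval_apply, hfun2]
      rw [← this, h0, map_zero]
    have hdvd' := dvd_sub_aeval_aux M q
    rw [hQ0, sub_zero] at hdvd'
    apply hdvd
    rw [show (X 0 ^ M - X 1 : MvPolynomial (Fin 2) K) = -(X 1 - X 0 ^ M) by ring]
    exact (neg_dvd).mpr hdvd'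
  have hQne : aeval ![r, r ^ M] q ≠ 0 := by
    intro h0
    apply hu
    rw [← hδQ, h0, map_zero]
  refine ⟨hQne, fun c d hc heq => ?_⟩
  rw [part1] at heq
  have h2 := congrArg δ heq
  rw [← Polynomial.aeval_algHom_apply, ← Polynomial.aeval_algHom_apply] at h2
  have hδs : δ (r + r ^ M * aeval ![r, r ^ M] q)
      = Polynomial.X + Polynomial.X ^ M * u := by
    rw [map_add, map_mul, map_pow, hδr, hδQ]
  have hδt : δ (C c * r + C d) = Polynomial.C c * Polynomial.X + Polynomial.C d := by
    rw [map_add, map_mul, hδr]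
    simp [hδ, algebraMap_eq]
  rw [hδs, hδt] at h2
  -- degree comparison
  have hXMu : (Polynomial.X ^ M * u).natDegree = M + u.natDegree := by
    rw [Polynomial.natDegree_mul (pow_ne_zero _ Polynomial.X_ne_zero) hu,
      Polynomial.natDegree_pow, Polynomial.natDegree_X, mul_one]
  have hg1 : (Polynomial.X + Polynomial.X ^ M * u).natDegree = M + u.natDegree := by
    rw [Polynomial.natDegree_add_eq_right_of_natDegree_lt, hXMu]
    rw [hXMu, Polynomial.natDegree_X]
    omega
  have hd1 := congrArg Polynomial.natDegree h2
  rw [← Polynomial.comp_eq_aeval, ← Polynomial.comp_eq_aeval,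
    Polynomial.natDegree_comp, Polynomial.natDegree_comp, hg1,
    Polynomial.natDegree_linear hc] at hd1
  have : M + u.natDegree = 1 := Nat.eq_of_mul_eq_mul_left hf hd1
  omega
end
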